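/- If θ lies in the row space R(X) of X and λ₁ denotes the smallest positive eigenvalue of XᵀX, then for any h > 0, ‖(h⁻¹XᵀX + I_p)⁻¹θ‖ ≤ (h/(λ₁ + h))‖θ‖ ≤ (h/λ₁)‖θ‖, where ‖·‖ is the Euclidean norm; i.e., the norm of the bias of the ridge regression estimator of θ is at most (h/λ₁)‖θ‖. -/

import Mathlib

open Matrix

/-- If `θ` lies in the row space of `X` (the column space of `Xᵀ`) and `λ₁` is the
smallest positive eigenvalue of `XᵀX`, then for any `h > 0`,
`‖(h⁻¹XᵀX + I_p)⁻¹ θ‖ ≤ (h/(λ₁+h)) ‖θ‖ ≤ (h/λ₁) ‖θ‖` in the Euclidean norm; i.e., the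
norm of the bias of the ridge regression estimator of `θ` is at most `(h/λ₁) ‖θ‖`. -/
theorem ridge_bias_norm_bound
    {n p : ℕ} (X : Matrix (Fin n) (Fin p) ℝ)
    (lam1 : ℝ) (hlam_pos : 0 < lam1)
    (hlam_eig : Module.End.HasEigenvalue (Xᵀ * X).mulVecLin lam1)
    (hlam_min : ∀ lam : ℝ, 0 < lam →
      Module.End.HasEigenvalue (Xᵀ * X).mulVecLin lam → lam1 ≤ lam)
    (θ : Fin p → ℝ) (hθ : ∃ v : Fin n → ℝ, θ = Xᵀ *ᵥ v)
    (h : ℝ) (hh : 0 < h) :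
    Real.sqrt (∑ j, ((h⁻¹ • (Xᵀ * X) + 1)⁻¹ *ᵥ θ) j ^ 2)
        ≤ (h / (lam1 + h)) * Real.sqrt (∑ j, θ j ^ 2) ∧
    (h / (lam1 + h)) * Real.sqrt (∑ j, θ j ^ 2)
        ≤ (h / lam1) * Real.sqrt (∑ j, θ j ^ 2) := by
  classical
  obtain ⟨v, hv⟩ := hθ
  set A : Matrix (Fin p) (Fin p) ℝ := Xᵀ * X with hAdef
  have hAsym : Aᵀ = A := by simp [hAdef, Matrix.transpose_mul]
  have hsymdot : ∀ x y : Fin p → ℝ, (A *ᵥ x) ⬝ᵥ y = x ⬝ᵥ (A *ᵥ y) := by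
    intro x y
    rw [Matrix.dotProduct_mulVec, ← Matrix.mulVec_transpose, hAsym]
  have hdot : ∀ x : Fin p → ℝ, x ⬝ᵥ (A *ᵥ x) = (X *ᵥ x) ⬝ᵥ (X *ᵥ x) := by
    intro x
    rw [hAdef, ← Matrix.mulVec_mulVec, Matrix.dotProduct_mulVec, Matrix.vecMul_transpose]
  have hdot_nonneg : ∀ x : Fin p → ℝ, 0 ≤ x ⬝ᵥ (A *ᵥ x) := by
    intro x
    rw [hdot]
    exact Finset.sum_nonneg fun i _ => mul_self_nonneg _
  set M : Matrix (Fin p) (Fin p) ℝ := h⁻¹ • A + 1 with hMdef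
  have hMsym : Mᵀ = M := by
    simp [hMdef, Matrix.transpose_add, Matrix.transpose_smul, hAsym]
  have hMmul : ∀ x : Fin p → ℝ, M *ᵥ x = h⁻¹ • (A *ᵥ x) + x := by
    intro x
    rw [hMdef, Matrix.add_mulVec, Matrix.smul_mulVec, Matrix.one_mulVec]
  have hMpd : M.PosDef := by
    refine Matrix.PosDef.of_dotProduct_mulVec_pos ?_ ?_
    · show Mᴴ = M
      rw [Matrix.conjTranspose_eq_transpose_of_trivial, hMsym]
    · intro x hx
      have hxx : 0 < x ⬝ᵥ x :=
        lt_of_le_of_ne (Finset.sum_nonneg fun i _ => mul_self_nonneg _)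
          (fun h0 => hx (dotProduct_self_eq_zero.mp h0.symm))
      have hst : star x ⬝ᵥ (M *ᵥ x) = h⁻¹ * (x ⬝ᵥ (A *ᵥ x)) + x ⬝ᵥ x := by
        simp [hMmul, dotProduct_add, smul_eq_mul]
      rw [hst]
      have := hdot_nonneg x
      positivity
  have hMunit : IsUnit M.det := (Matrix.isUnit_iff_isUnit_det M).mp hMpd.isUnit
  set w : Fin p → ℝ := M⁻¹ *ᵥ θ with hwdef
  have hMw : M *ᵥ w = θ := by
    rw [hwdef, Matrix.mulVec_mulVec, Matrix.mul_nonsing_inv _ hMunit, Matrix.one_mulVec]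
  have hperp : ∀ u : Fin p → ℝ, A *ᵥ u = 0 → w ⬝ᵥ u = 0 := by
    intro u hu
    have hXu : X *ᵥ u = 0 := by
      have h0 : (X *ᵥ u) ⬝ᵥ (X *ᵥ u) = 0 := by rw [← hdot, hu, dotProduct_zero]
      exact dotProduct_self_eq_zero.mp h0
    have hθu : θ ⬝ᵥ u = 0 := by
      rw [hv, dotProduct_comm, Matrix.dotProduct_mulVec, Matrix.vecMul_transpose,
        hXu, zero_dotProduct]
    have hMu : M *ᵥ u = u := by rw [hMmul, hu]; simp
    have hMinvu : M⁻¹ *ᵥ u = u := by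
      conv_lhs => rw [← hMu]
      rw [Matrix.mulVec_mulVec, Matrix.nonsing_inv_mul _ hMunit, Matrix.one_mulVec]
    have hMinvT : M⁻¹ᵀ = M⁻¹ := by rw [Matrix.transpose_nonsing_inv, hMsym]
    calc w ⬝ᵥ u = u ⬝ᵥ (M⁻¹ *ᵥ θ) := by rw [dotProduct_comm, hwdef]
      _ = (M⁻¹ *ᵥ u) ⬝ᵥ θ := by
          rw [Matrix.dotProduct_mulVec, ← Matrix.mulVec_transpose, hMinvT]
      _ = u ⬝ᵥ θ := by rw [hMinvu]
      _ = 0 := by rw [dotProduct_comm, hθu]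
  -- spectral theory
  have hTsym : LinearMap.IsSymmetric (𝕜 := ℝ) (E := EuclideanSpace ℝ (Fin p)) (Matrix.toEuclideanLin A) := by
    intro x y
    change (y.ofLp ⬝ᵥ star (A *ᵥ x.ofLp)) = (A *ᵥ y.ofLp) ⬝ᵥ star x.ofLp
    simp only [star_trivial]
    rw [hsymdot]
  have hn : Module.finrank ℝ (EuclideanSpace ℝ (Fin p)) = p := finrank_euclideanSpace_fin
  set b := hTsym.eigenvectorBasis hn with hbdef
  set μ := hTsym.eigenvalues hn with hμdef
  have hb : ∀ i, A *ᵥ (b i : Fin p → ℝ) = μ i • (b i : Fin p → ℝ) := by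
    intro i
    exact congrArg WithLp.ofLp (hTsym.apply_eigenvectorBasis hn i)
  have hinner : ∀ x y : EuclideanSpace ℝ (Fin p),
      (inner ℝ x y : ℝ) = (x : Fin p → ℝ) ⬝ᵥ (y : Fin p → ℝ) := by
    intro x y
    rw [EuclideanSpace.inner_eq_star_dotProduct, star_trivial, dotProduct_comm]
  have hbne : ∀ i, (b i : Fin p → ℝ) ≠ 0 := fun i h0 => b.orthonormal.ne_zero i (by ext j; exact congrFun h0 j)
  have hμnonneg : ∀ i, 0 ≤ μ i := by
    intro i
    have h1 : (b i : Fin p → ℝ) ⬝ᵥ (A *ᵥ (b i : Fin p → ℝ))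
        = μ i * ((b i : Fin p → ℝ) ⬝ᵥ (b i : Fin p → ℝ)) := by
      rw [hb i]
      simp only [dotProduct, PiLp.smul_apply, Pi.smul_apply, smul_eq_mul, Finset.mul_sum]
      exact Finset.sum_congr rfl fun j _ => by ring
    have h2 : 0 < (b i : Fin p → ℝ) ⬝ᵥ (b i : Fin p → ℝ) :=
      lt_of_le_of_ne (Finset.sum_nonneg fun j _ => mul_self_nonneg _)
        (fun h0 => hbne i (dotProduct_self_eq_zero.mp h0.symm))
    have h3 := hdot_nonneg (b i)
    rw [h1] at h3
    nlinarith [h2, h3]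
  have hμge : ∀ i, 0 < μ i → lam1 ≤ μ i := by
    intro i hi
    refine hlam_min (μ i) hi (Module.End.hasEigenvalue_of_hasEigenvector
      (x := (b i : Fin p → ℝ)) ⟨Module.End.mem_eigenspace_iff.mpr ?_, hbne i⟩)
    exact hb i
  -- key inequality
  have hs1 := b.sum_inner_mul_inner (WithLp.toLp 2 (A *ᵥ w)) (WithLp.toLp 2 w)
  have hs2 := b.sum_inner_mul_inner (WithLp.toLp 2 w) (WithLp.toLp 2 w)
  simp only [hinner, WithLp.ofLp_toLp, Matrix.mulVecLin_apply] at hs1 hs2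
  have hkey : lam1 * (w ⬝ᵥ w) ≤ w ⬝ᵥ (A *ᵥ w) := by
    rw [← hs2, ← hsymdot, ← hs1, Finset.mul_sum]
    refine Finset.sum_le_sum fun i _ => ?_
    have hcomm : (b i : Fin p → ℝ) ⬝ᵥ w = w ⬝ᵥ (b i : Fin p → ℝ) :=
      dotProduct_comm _ _
    have hAb : (A *ᵥ w) ⬝ᵥ (b i : Fin p → ℝ) = μ i * (w ⬝ᵥ (b i : Fin p → ℝ)) := by
      rw [hsymdot, hb i]
      simp only [dotProduct, PiLp.smul_apply, Pi.smul_apply, smul_eq_mul, Finset.mul_sum]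
      exact Finset.sum_congr rfl fun j _ => by ring
    rw [hAb, hcomm]
    rcases eq_or_lt_of_le (hμnonneg i) with h0 | h0
    · have hb0 : A *ᵥ (b i : Fin p → ℝ) = 0 := by rw [hb i, ← h0, zero_smul]
      rw [hperp (b i) hb0]
      simp
    · have := hμge i h0
      nlinarith [sq_nonneg (w ⬝ᵥ (b i : Fin p → ℝ))]
  -- arithmetic wrap-up
  have hnorm : ∀ u : EuclideanSpace ℝ (Fin p), Real.sqrt (∑ j, u j ^ 2) = ‖u‖ := by
    intro u
    rw [EuclideanSpace.norm_eq]
    congr 1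
    exact Finset.sum_congr rfl fun j _ => by rw [Real.norm_eq_abs, sq_abs]
  set wE : EuclideanSpace ℝ (Fin p) := (WithLp.equiv 2 (Fin p → ℝ)).symm w with hwEdef
  set θE : EuclideanSpace ℝ (Fin p) := (WithLp.equiv 2 (Fin p → ℝ)).symm θ with hθEdef
  have hw2 : w ⬝ᵥ w = ‖wE‖ ^ 2 := by
    rw [← real_inner_self_eq_norm_sq, hinner]
    rfl
  have hCS : θ ⬝ᵥ w ≤ ‖θE‖ * ‖wE‖ := by
    have hc := real_inner_le_norm θE wE
    rw [hinner] at hc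
    exact hc
  have hθw : θ ⬝ᵥ w = h⁻¹ * (w ⬝ᵥ (A *ᵥ w)) + w ⬝ᵥ w := by
    conv_lhs => rw [← hMw, hMmul]
    rw [add_dotProduct, smul_dotProduct, smul_eq_mul, hsymdot]
  have hineq : h * ‖wE‖ ^ 2 + lam1 * ‖wE‖ ^ 2 ≤ h * (‖θE‖ * ‖wE‖) := by
    have h1 : h⁻¹ * (lam1 * (w ⬝ᵥ w)) ≤ h⁻¹ * (w ⬝ᵥ (A *ᵥ w)) :=
      mul_le_mul_of_nonneg_left hkey (inv_nonneg.mpr hh.le)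
    have h2 : ‖wE‖ ^ 2 + h⁻¹ * (lam1 * ‖wE‖ ^ 2) ≤ ‖θE‖ * ‖wE‖ := by
      rw [← hw2]
      linarith [hθw, hCS, h1]
    have h3 := mul_le_mul_of_nonneg_left h2 hh.le
    have h4 : h * h⁻¹ = 1 := mul_inv_cancel₀ hh.ne'
    have h5 : h * (h⁻¹ * (lam1 * ‖wE‖ ^ 2)) = lam1 * ‖wE‖ ^ 2 := by
      rw [← mul_assoc, h4, one_mul]
    rw [mul_add, h5] at h3
    linarith
  have hG1 : Real.sqrt (∑ j, w j ^ 2) = ‖wE‖ := by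
    rw [EuclideanSpace.norm_eq]
    congr 1
    refine Finset.sum_congr rfl fun j _ => ?_
    rw [Real.norm_eq_abs, sq_abs, hwEdef, WithLp.equiv_symm_apply, PiLp.toLp_apply]
  have hG2 : Real.sqrt (∑ j, θ j ^ 2) = ‖θE‖ := by
    rw [EuclideanSpace.norm_eq]
    congr 1
    refine Finset.sum_congr rfl fun j _ => ?_
    rw [Real.norm_eq_abs, sq_abs, hθEdef, WithLp.equiv_symm_apply, PiLp.toLp_apply]
  have hnw0 : (0:ℝ) ≤ ‖wE‖ := norm_nonneg _
  have hnθ0 : (0:ℝ) ≤ ‖θE‖ := norm_nonneg _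
  constructor
  · rw [hG1, hG2, div_mul_eq_mul_div, le_div_iff₀ (by linarith : (0:ℝ) < lam1 + h)]
    rcases eq_or_lt_of_le hnw0 with h0 | h0
    · rw [← h0, zero_mul]
      positivity
    · nlinarith [hineq, h0, hnθ0]
  · rw [hG2]
    have hd : h / (lam1 + h) ≤ h / lam1 := by
      apply div_le_div_of_nonneg_left hh.le hlam_pos
      linarith
    exact mul_le_mul_of_nonneg_right hd hnθ0
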